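/- arXiv:2104.12477 — 4 statements merged into one kernel-verified Lean document; each statement's English description precedes it below -/
import Mathlib

section
/- Let l be a symmetric loss with Σ_{y=1}^C l(z,y) = K constant, and suppose ρ < (C−1)/C. Let 𝒵 be a set of ℝ^C-valued random variables of the form f(X) for measurable f, with l(Z,Y) and l(Z,Ȳ) integrable for all Z ∈ 𝒵. Then argmin_{Z∈𝒵} E[l(Z,Ȳ)] ⊆ argmin_{Z∈𝒵} E[l(Z,Y)]; that is, every minimizer of the noisy risk is a minimizer of the clean risk, so l is robust to uniform label noise. -/
open MeasureTheory

/-- `Ybar` is a uniformly noisy version of `Y` at noise level `ρ` (expectation form of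
`P(Ȳ=i | Y,X) = ρ/(C−1)` for `i ≠ Y` and `1−ρ` for `i = Y`). -/
def UniformLabelNoise {Ω 𝒳 : Type*} [MeasurableSpace Ω] (P : Measure Ω) (C : ℕ) (ρ : ℝ)
    (X : Ω → 𝒳) (Y Ybar : Ω → Fin C) : Prop :=
  ∀ h : 𝒳 → Fin C → ℝ,
    Integrable (fun ω => h (X ω) (Ybar ω)) P →
    Integrable (fun ω => h (X ω) (Y ω)) P →
    (∀ i, Integrable (fun ω => h (X ω) i) P) →
    ∫ ω, h (X ω) (Ybar ω) ∂P =
      (1 - ρ) * ∫ ω, h (X ω) (Y ω) ∂P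
        + (ρ / ((C : ℝ) - 1)) * ∫ ω, (∑ i : Fin C, if i = Y ω then 0 else h (X ω) i) ∂P

/-- For a symmetric loss `l` and `ρ < (C−1)/C`, every minimizer over `𝒵` of the noisy
risk `E[l(Z,Ȳ)]` is a minimizer of the clean risk `E[l(Z,Y)]`: the symmetric loss `l`
is robust to uniform label noise. -/
theorem stmt2
    {Ω 𝒳 : Type*} [MeasurableSpace Ω] [MeasurableSpace 𝒳]
    (P : Measure Ω) [IsProbabilityMeasure P]
    (C : ℕ) (hC : 2 ≤ C) (ρ : ℝ) (hρ0 : 0 ≤ ρ) (hρ : ρ < ((C : ℝ) - 1) / C)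
    (X : Ω → 𝒳) (Y Ybar : Ω → Fin C)
    (hX : Measurable X) (hY : Measurable Y) (hYbar : Measurable Ybar)
    (hnoise : UniformLabelNoise P C ρ X Y Ybar)
    (l : (Fin C → ℝ) → Fin C → ℝ) (K : ℝ)
    (hsym : ∀ z, ∑ y : Fin C, l z y = K)
    (𝒵 : Set (Ω → Fin C → ℝ))
    (h𝒵 : ∀ Z ∈ 𝒵, ∃ f : 𝒳 → Fin C → ℝ, Measurable f ∧ Z = fun ω => f (X ω))
    (hint1 : ∀ Z ∈ 𝒵, Integrable (fun ω => l (Z ω) (Ybar ω)) P)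
    (hint2 : ∀ Z ∈ 𝒵, Integrable (fun ω => l (Z ω) (Y ω)) P)
    (hint3 : ∀ Z ∈ 𝒵, ∀ i, Integrable (fun ω => l (Z ω) i) P) :
    ∀ Zbar ∈ 𝒵,
      (∀ W ∈ 𝒵, ∫ ω, l (Zbar ω) (Ybar ω) ∂P ≤ ∫ ω, l (W ω) (Ybar ω) ∂P) →
      (∀ W ∈ 𝒵, ∫ ω, l (Zbar ω) (Y ω) ∂P ≤ ∫ ω, l (W ω) (Y ω) ∂P) := by
  intro Zbar hZbar hmin W hW
  -- key: for any Z ∈ 𝒵, noisy risk is affine in clean risk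
  have key : ∀ Z ∈ 𝒵, ∫ ω, l (Z ω) (Ybar ω) ∂P =
      (1 - ρ - ρ / ((C : ℝ) - 1)) * ∫ ω, l (Z ω) (Y ω) ∂P + (ρ / ((C : ℝ) - 1)) * K := by
    intro Z hZ
    obtain ⟨f, hf, rfl⟩ := h𝒵 Z hZ
    have hsumeq : ∀ ω, (∑ i : Fin C, if i = Y ω then 0 else l (f (X ω)) i)
        = K - l (f (X ω)) (Y ω) := by
      intro ω
      have h1 : ∑ i : Fin C, (if i = Y ω then 0 else l (f (X ω)) i)
          = ∑ i : Fin C, (l (f (X ω)) i - if i = Y ω then l (f (X ω)) i else 0) :=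
        Finset.sum_congr rfl (by intro i _; by_cases h : i = Y ω <;> simp [h])
      rw [h1, Finset.sum_sub_distrib, hsym]
      simp
    have hmain := hnoise (fun x y => l (f x) y) (hint1 _ hZ) (hint2 _ hZ) (hint3 _ hZ)
    rw [hmain]
    have hint : ∫ ω, (∑ i : Fin C, if i = Y ω then 0 else l (f (X ω)) i) ∂P
        = K - ∫ ω, l (f (X ω)) (Y ω) ∂P := by
      rw [show (fun ω => (∑ i : Fin C, if i = Y ω then 0 else l (f (X ω)) i))
          = fun ω => K - l (f (X ω)) (Y ω) from funext hsumeq]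
      rw [integral_sub (integrable_const K) (hint2 _ hZ)]
      simp
    rw [hint]
    ring
  have hCpos : (0:ℝ) < (C : ℝ) - 1 := by
    have : (2:ℝ) ≤ (C:ℝ) := by exact_mod_cast hC
    linarith
  have hC0 : (0:ℝ) < (C:ℝ) := by linarith
  have hρC : ρ * C < (C:ℝ) - 1 := by
    have := (lt_div_iff₀ hC0).mp hρ
    linarith
  have hapos : 0 < 1 - ρ - ρ / ((C : ℝ) - 1) := by
    have heq : 1 - ρ - ρ / ((C : ℝ) - 1) = ((C:ℝ) - 1 - ρ * C) / ((C:ℝ) - 1) := by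
      field_simp
      ring
    rw [heq]
    exact div_pos (by linarith) hCpos
  have h1 := hmin W hW
  rw [key _ hZbar, key _ hW] at h1
  have h2 : (1 - ρ - ρ / ((C : ℝ) - 1)) * ∫ ω, l (Zbar ω) (Y ω) ∂P
      ≤ (1 - ρ - ρ / ((C : ℝ) - 1)) * ∫ ω, l (W ω) (Y ω) ∂P := by linarith
  exact le_of_mul_le_mul_left h2 hapos
end

section
/- Let l be a symmetric loss (Σ_{y=1}^C l(z,y) = K constant in z) and let g : ℝ^C → ℝ be a regularizer. Set a = 1 − ρC/(C−1) > 0 and λ = 1/a. Then for any set 𝒵 of random variables f(X) (f measurable) on which all expectations below are finite, argmin_{Z∈𝒵} ( E[l(Z,Ȳ)] + E[g(Z)] ) ⊆ argmin_{Z∈𝒵} ( E[l(Z,Y)] + λ·E[g(Z)] ). -/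
open MeasureTheory

/-- Lemma 1 of the paper: for a symmetric loss `l`, a regularizer `g` (unique minimum
at `0`), `a = 1 − ρC/(C−1) > 0` and `λ = 1/a`, every minimizer over `𝒵` of the noisy
regularized risk `E[l(Z,Ȳ)] + E[g(Z)]` is a minimizer of the clean regularized risk
`E[l(Z,Y)] + λ·E[g(Z)]`. -/
theorem stmt3
    {Ω 𝒳 : Type*} [MeasurableSpace Ω] [MeasurableSpace 𝒳]
    (P : Measure Ω) [IsProbabilityMeasure P]
    (C : ℕ) (hC : 2 ≤ C) (ρ : ℝ) (hρ0 : 0 ≤ ρ) (hρ : ρ < ((C : ℝ) - 1) / C)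
    (X : Ω → 𝒳) (Y Ybar : Ω → Fin C)
    (hX : Measurable X) (hY : Measurable Y) (hYbar : Measurable Ybar)
    (hnoise : UniformLabelNoise P C ρ X Y Ybar)
    (l : (Fin C → ℝ) → Fin C → ℝ) (K : ℝ)
    (hsym : ∀ z, ∑ y : Fin C, l z y = K)
    (g : (Fin C → ℝ) → ℝ) (hreg : ∀ z, z ≠ 0 → g 0 < g z)
    (a lam : ℝ) (ha : a = 1 - ρ * C / ((C : ℝ) - 1)) (ha0 : 0 < a) (hlam : lam = 1 / a)
    (𝒵 : Set (Ω → Fin C → ℝ))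
    (h𝒵 : ∀ Z ∈ 𝒵, ∃ f : 𝒳 → Fin C → ℝ, Measurable f ∧ Z = fun ω => f (X ω))
    (hint1 : ∀ Z ∈ 𝒵, Integrable (fun ω => l (Z ω) (Ybar ω)) P)
    (hint2 : ∀ Z ∈ 𝒵, Integrable (fun ω => l (Z ω) (Y ω)) P)
    (hint3 : ∀ Z ∈ 𝒵, ∀ i, Integrable (fun ω => l (Z ω) i) P)
    (hint4 : ∀ Z ∈ 𝒵, Integrable (fun ω => g (Z ω)) P) :
    ∀ Zbar ∈ 𝒵,
      (∀ W ∈ 𝒵,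
        (∫ ω, l (Zbar ω) (Ybar ω) ∂P) + ∫ ω, g (Zbar ω) ∂P ≤
          (∫ ω, l (W ω) (Ybar ω) ∂P) + ∫ ω, g (W ω) ∂P) →
      (∀ W ∈ 𝒵,
        (∫ ω, l (Zbar ω) (Y ω) ∂P) + lam * ∫ ω, g (Zbar ω) ∂P ≤
          (∫ ω, l (W ω) (Y ω) ∂P) + lam * ∫ ω, g (W ω) ∂P) := by
  have hC1 : ((C : ℝ) - 1) ≠ 0 := by
    have : (2 : ℝ) ≤ (C : ℝ) := by exact_mod_cast hC
    linarith
  -- key identity: noisy risk = a * clean risk + ρK/(C-1)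
  have key : ∀ Z ∈ 𝒵, ∫ ω, l (Z ω) (Ybar ω) ∂P
      = a * ∫ ω, l (Z ω) (Y ω) ∂P + ρ / ((C : ℝ) - 1) * K := by
    intro Z hZ
    obtain ⟨f, hf, rfl⟩ := h𝒵 Z hZ
    have heq := hnoise (fun x y => l (f x) y) (hint1 _ hZ) (hint2 _ hZ) (hint3 _ hZ)
    have hsum : ∀ ω, (∑ i : Fin C, if i = Y ω then 0 else l (f (X ω)) i)
        = K - l (f (X ω)) (Y ω) := by
      intro ω
      have h2 : (∑ i : Fin C, if i = Y ω then 0 else l (f (X ω)) i)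
          = (∑ i : Fin C, l (f (X ω)) i) - ∑ i : Fin C, (if i = Y ω then l (f (X ω)) i else 0) := by
        rw [← Finset.sum_sub_distrib]
        congr 1; ext i
        by_cases h : i = Y ω <;> simp [h]
      rw [h2, hsym, Finset.sum_ite_eq' Finset.univ (Y ω) (fun i => l (f (X ω)) i)]
      simp
    have hint : ∫ ω, (∑ i : Fin C, if i = Y ω then 0 else l (f (X ω)) i) ∂P
        = K - ∫ ω, l (f (X ω)) (Y ω) ∂P := by
      simp_rw [hsum]
      rw [integral_sub (integrable_const K) (hint2 _ hZ)]
      simp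
    rw [hint] at heq
    rw [heq, ha]
    field_simp
    ring
  intro Zbar hZbar hmin W hW
  have h1 := hmin W hW
  rw [key Zbar hZbar, key W hW] at h1
  have hlam' : a * lam = 1 := by rw [hlam]; field_simp
  have e : ∀ L G : ℝ, a * (L + lam * G) = a * L + G := by
    intro L G; rw [mul_add, ← mul_assoc, hlam', one_mul]
  have h2 : a * ((∫ ω, l (Zbar ω) (Y ω) ∂P) + lam * ∫ ω, g (Zbar ω) ∂P)
      ≤ a * ((∫ ω, l (W ω) (Y ω) ∂P) + lam * ∫ ω, g (W ω) ∂P) := by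
    rw [e, e]; linarith
  exact le_of_mul_le_mul_left h2 ha0
end

section
/- Assume the set 𝒵 of ℝ^C-valued random variables satisfies: for all t > 0, Z ∈ 𝒵 if and only if tZ ∈ 𝒵. Then the square loss with the modified one-hot encoding, l(z,y) = ‖z − onehot*(y)‖², is robust to uniform label noise: every minimizer of E[‖Z − onehot*(Ȳ)‖²] over 𝒵 admits a minimizer of E[‖Z − onehot*(Y)‖²] over 𝒵 with almost surely equal predictions pred(Z) = argmax_i Z_i. -/
open MeasureTheory

/-- The modified one-hot encoding `onehot*(y) = onehot(y) - (1/C)·𝟙`. -/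
noncomputable def onehotStar (C : ℕ) (y : Fin C) : Fin C → ℝ :=
  fun i => (if i = y then (1 : ℝ) else 0) - 1 / (C : ℝ)

/-- The square loss with modified one-hot targets, `‖z − onehot*(y)‖²`. -/
noncomputable def sqLoss (C : ℕ) (z : Fin C → ℝ) (y : Fin C) : ℝ :=
  ∑ i, (z i - onehotStar C y i) ^ 2

/-- The set of predictions `argmax_i z_i` of an output vector `z`. -/
def predSet (C : ℕ) (z : Fin C → ℝ) : Set (Fin C) := {i | ∀ j, z j ≤ z i}

lemma sqLoss_expand {C : ℕ} (hC : 0 < C) (z : Fin C → ℝ) (y : Fin C) :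
    sqLoss C z y = (∑ j, (z j)^2) - 2 * (z y - (∑ j, z j)/C) + (1 - 1/(C:ℝ)) := by
  have hC' : (C:ℝ) ≠ 0 := Nat.cast_ne_zero.2 hC.ne'
  have hptw : ∀ j, (z j - onehotStar C y j)^2
      = (z j)^2 + (if j = y then -2 * z j + (1 - 2/(C:ℝ)) else 0) + (2/(C:ℝ)) * z j
        + 1/(C:ℝ)^2 := by
    intro j
    unfold onehotStar
    by_cases h : j = y <;> simp [h] <;> field_simp <;> ring
  unfold sqLoss
  simp only [hptw, Finset.sum_add_distrib, Finset.sum_ite_eq', Finset.mem_univ, if_true,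
    ← Finset.mul_sum, Finset.sum_const, Finset.card_univ, Fintype.card_fin, nsmul_eq_mul]
  field_simp
  ring

lemma sum_sqLoss {C : ℕ} (hC : 0 < C) (z : Fin C → ℝ) :
    ∑ i, sqLoss C z i = (C:ℝ) * (∑ j, (z j)^2) + ((C:ℝ) - 1) := by
  have hC' : (C:ℝ) ≠ 0 := Nat.cast_ne_zero.2 hC.ne'
  simp only [sqLoss_expand hC z, Finset.sum_add_distrib, Finset.sum_sub_distrib,
    ← Finset.mul_sum, Finset.sum_const, Finset.card_univ, Fintype.card_fin, nsmul_eq_mul]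
  field_simp
  ring

lemma sqLoss_smul {C : ℕ} (hC : 0 < C) (t : ℝ) (z : Fin C → ℝ) (y : Fin C) :
    sqLoss C (t • z) y
      = t * sqLoss C z y + (t^2 - t) * (∑ j, (z j)^2) + (1 - t) * (1 - 1/(C:ℝ)) := by
  rw [sqLoss_expand hC, sqLoss_expand hC]
  simp only [Pi.smul_apply, smul_eq_mul, mul_pow, ← Finset.mul_sum, ← Finset.sum_div]
  field_simp
  ring

lemma sum_sqLoss_ne {C : ℕ} (hC : 0 < C) (z : Fin C → ℝ) (y : Fin C) :
    ∑ i, (if i = y then 0 else sqLoss C z i)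
      = (C:ℝ) * (∑ j, (z j)^2) + ((C:ℝ) - 1) - sqLoss C z y := by
  have : ∀ i, (if i = y then (0:ℝ) else sqLoss C z i)
      = sqLoss C z i - (if i = y then sqLoss C z i else 0) := by
    intro i; by_cases h : i = y <;> simp [h]
  simp only [this, Finset.sum_sub_distrib, Finset.sum_ite_eq', Finset.mem_univ, if_true,
    sum_sqLoss hC z]

lemma predSet_smul {C : ℕ} {t : ℝ} (ht : 0 < t) (z : Fin C → ℝ) :
    predSet C (t • z) = predSet C z := by
  ext i
  simp only [predSet, Set.mem_setOf_eq, Pi.smul_apply, smul_eq_mul]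
  exact ⟨fun h j => (mul_le_mul_iff_right₀ ht).mp (h j), fun h j => (mul_le_mul_iff_right₀ ht).mpr (h j)⟩

lemma sum_sq_smul {C : ℕ} (t : ℝ) (z : Fin C → ℝ) :
    ∑ j, ((t • z) j)^2 = t^2 * ∑ j, (z j)^2 := by
  simp only [Pi.smul_apply, smul_eq_mul, mul_pow, ← Finset.mul_sum]

/-- If `𝒵` is closed under positive scaling, then the square loss with modified one-hot
encoding `l(z,y) = ‖z − onehot*(y)‖²` is robust to uniform label noise: every minimizer
of `E[‖Z − onehot*(Ȳ)‖²]` over `𝒵` admits a minimizer of `E[‖Z − onehot*(Y)‖²]` over `𝒵`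
with almost surely equal predictions. -/
theorem stmt5
    {Ω 𝒳 : Type*} [MeasurableSpace Ω] [MeasurableSpace 𝒳]
    (P : Measure Ω) [IsProbabilityMeasure P]
    (C : ℕ) (hC : 2 ≤ C) (ρ : ℝ) (hρ0 : 0 ≤ ρ) (hρ : ρ < ((C : ℝ) - 1) / C)
    (X : Ω → 𝒳) (Y Ybar : Ω → Fin C)
    (hX : Measurable X) (hY : Measurable Y) (hYbar : Measurable Ybar)
    (hnoise : UniformLabelNoise P C ρ X Y Ybar)
    (𝒵 : Set (Ω → Fin C → ℝ))
    (h𝒵 : ∀ Z ∈ 𝒵, ∃ f : 𝒳 → Fin C → ℝ, Measurable f ∧ Z = fun ω => f (X ω))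
    (hscale : ∀ t : ℝ, 0 < t → ∀ Z : Ω → Fin C → ℝ, Z ∈ 𝒵 ↔ (fun ω => t • Z ω) ∈ 𝒵)
    (hint1 : ∀ Z ∈ 𝒵, Integrable (fun ω => sqLoss C (Z ω) (Ybar ω)) P)
    (hint2 : ∀ Z ∈ 𝒵, Integrable (fun ω => sqLoss C (Z ω) (Y ω)) P)
    (hint3 : ∀ Z ∈ 𝒵, ∀ i, Integrable (fun ω => sqLoss C (Z ω) i) P) :
    ∀ Zbar ∈ 𝒵,
      (∀ W ∈ 𝒵,
        (∫ ω, sqLoss C (Zbar ω) (Ybar ω) ∂P) ≤ ∫ ω, sqLoss C (W ω) (Ybar ω) ∂P) →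
      ∃ Zstar ∈ 𝒵,
        (∀ W ∈ 𝒵,
          (∫ ω, sqLoss C (Zstar ω) (Y ω) ∂P) ≤ ∫ ω, sqLoss C (W ω) (Y ω) ∂P) ∧
        ∀ᵐ ω ∂P, predSet C (Zbar ω) = predSet C (Zstar ω) := by
  intro Zbar hZbar hmin
  have hC0 : 0 < C := by omega
  have hC2 : (2:ℝ) ≤ (C:ℝ) := by exact_mod_cast hC
  have hCpos : (0:ℝ) < (C:ℝ) := by linarith
  have hC1 : (0:ℝ) < (C:ℝ) - 1 := by linarith
  have hCne : (C:ℝ) ≠ 0 := ne_of_gt hCpos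
  have hρC : ρ * C < (C:ℝ) - 1 := by
    have := (lt_div_iff₀ hCpos).mp hρ
    linarith
  set a : ℝ := 1 - ρ * C / ((C:ℝ) - 1) with ha_def
  have ha : 0 < a := by
    have : ρ * C / ((C:ℝ) - 1) < 1 := (div_lt_one hC1).mpr hρC
    simp only [ha_def]
    linarith
  have ht : 0 < a⁻¹ := inv_pos.mpr ha
  -- integrability of the squared norm
  have iS : ∀ Z ∈ 𝒵, Integrable (fun ω => ∑ j, (Z ω j)^2) P := by
    intro Z hZ
    have h := integrable_finset_sum (μ := P) Finset.univ (fun i _ => hint3 Z hZ i)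
    simp only [sum_sqLoss hC0] at h
    have h3 : Integrable (fun ω => (C:ℝ) * ∑ j, (Z ω j)^2) P := by
      simpa [Pi.sub_def] using h.sub (integrable_const ((C:ℝ) - 1))
    have h4 := h3.const_mul (C:ℝ)⁻¹
    simpa [← mul_assoc, inv_mul_cancel₀ hCne] using h4
  -- the noisy risk identity
  have key : ∀ Z ∈ 𝒵, ∫ ω, sqLoss C (Z ω) (Ybar ω) ∂P
      = a * (∫ ω, sqLoss C (Z ω) (Y ω) ∂P)
        + (1 - a) * (∫ ω, ∑ j, (Z ω j)^2 ∂P) + ρ := by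
    intro Z hZ
    obtain ⟨f, hf, rfl⟩ := h𝒵 Z hZ
    have h := hnoise (fun x i => sqLoss C (f x) i) (hint1 _ hZ) (hint2 _ hZ) (hint3 _ hZ)
    simp only [] at h ⊢
    have h2 : ∫ ω, (∑ i : Fin C, if i = Y ω then 0 else sqLoss C (f (X ω)) i) ∂P
        = (C:ℝ) * (∫ ω, ∑ j, (f (X ω) j)^2 ∂P) + ((C:ℝ) - 1)
          - ∫ ω, sqLoss C (f (X ω)) (Y ω) ∂P := by
      simp only [sum_sqLoss_ne hC0]
      have i1 : Integrable (fun ω => (C:ℝ) * ∑ j, (f (X ω) j)^2) P := (iS _ hZ).const_mul _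
      have i2 : Integrable (fun ω => (C:ℝ) * ∑ j, (f (X ω) j)^2 + ((C:ℝ) - 1)) P :=
        i1.add (integrable_const _)
      rw [integral_sub i2 (hint2 _ hZ), integral_add i1 (integrable_const _),
        integral_const_mul, integral_const]
      simp [measure_univ]
    rw [h, h2]
    simp only [ha_def]
    field_simp
    ring
  -- the clean risk of a scaled predictor
  have keyR : ∀ (s : ℝ) (Z : Ω → Fin C → ℝ), Integrable (fun ω => sqLoss C (Z ω) (Y ω)) P →
      Integrable (fun ω => ∑ j, (Z ω j)^2) P →
      ∫ ω, sqLoss C (s • Z ω) (Y ω) ∂P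
        = s * ∫ ω, sqLoss C (Z ω) (Y ω) ∂P + (s^2 - s) * ∫ ω, ∑ j, (Z ω j)^2 ∂P
          + (1 - s) * (1 - 1/(C:ℝ)) := by
    intro s Z hR hS
    simp only [sqLoss_smul hC0]
    have i1 : Integrable (fun ω => s * sqLoss C (Z ω) (Y ω)) P := hR.const_mul s
    have i2 : Integrable (fun ω => (s^2 - s) * ∑ j, (Z ω j)^2) P := hS.const_mul _
    have i12 : Integrable
        (fun ω => s * sqLoss C (Z ω) (Y ω) + (s^2 - s) * ∑ j, (Z ω j)^2) P := i1.add i2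
    rw [integral_add i12 (integrable_const _), integral_add i1 i2,
      integral_const_mul, integral_const_mul, integral_const]
    simp [measure_univ]
  refine ⟨fun ω => a⁻¹ • Zbar ω, (hscale a⁻¹ ht Zbar).mp hZbar, ?_, ?_⟩
  · intro W hW
    have hW' : (fun ω => a • W ω) ∈ 𝒵 := (hscale a ha W).mp hW
    have h1 := hmin _ hW'
    rw [key _ hZbar, key _ hW'] at h1
    try simp only [] at h1
    have e3 := keyR a W (hint2 W hW) (iS W hW)
    have e4 : ∫ ω, ∑ j, ((a • W ω) j)^2 ∂P = a^2 * ∫ ω, ∑ j, (W ω j)^2 ∂P := by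
      simp only [sum_sq_smul]
      rw [integral_const_mul]
    rw [e3, e4] at h1
    show ∫ ω, sqLoss C (a⁻¹ • Zbar ω) (Y ω) ∂P ≤ ∫ ω, sqLoss C (W ω) (Y ω) ∂P
    rw [keyR a⁻¹ Zbar (hint2 _ hZbar) (iS _ hZbar)]
    refine le_of_mul_le_mul_left ?_ (pow_pos ha 2)
    have hL : a^2 * (a⁻¹ * ∫ ω, sqLoss C (Zbar ω) (Y ω) ∂P
          + ((a⁻¹)^2 - a⁻¹) * ∫ ω, ∑ j, (Zbar ω j)^2 ∂P + (1 - a⁻¹) * (1 - 1/(C:ℝ)))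
        = a * ∫ ω, sqLoss C (Zbar ω) (Y ω) ∂P
          + (1 - a) * ∫ ω, ∑ j, (Zbar ω j)^2 ∂P + (a^2 - a) * (1 - 1/(C:ℝ)) := by
      field_simp
    rw [hL]
    nlinarith [h1]
  · refine Filter.Eventually.of_forall (fun ω => ?_)
    exact (predSet_smul ht (Zbar ω)).symm
end

section
/- For every p in the probability simplex in ℝ^C and every y ∈ {1,…,C}, the Mean Absolute Error loss satisfies ‖p − onehot(y)‖₁ = 2(1 − p_y); consequently Σ_{y=1}^C ‖p − onehot(y)‖₁ = 2(C − 1) for all p in the simplex, so the MAE loss is symmetric on the simplex. -/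
/-- The one-hot encoding `onehot(y) ∈ ℝ^C`. -/
def onehot (C : ℕ) (y : Fin C) : Fin C → ℝ :=
  fun i => if i = y then 1 else 0

/-- For `p` in the probability simplex, the Mean Absolute Error loss satisfies
`‖p − onehot(y)‖₁ = 2(1 − p_y)` for every label `y`; consequently
`Σ_y ‖p − onehot(y)‖₁ = 2(C − 1)`, so the MAE loss is symmetric on the simplex. -/
theorem stmt14 (C : ℕ) (hC : 1 ≤ C) (p : Fin C → ℝ)
    (hp : ∀ i, 0 ≤ p i) (hsum : ∑ i, p i = 1) :
    (∀ y : Fin C, ∑ i, |p i - onehot C y i| = 2 * (1 - p y)) ∧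
      ∑ y : Fin C, ∑ i, |p i - onehot C y i| = 2 * ((C : ℝ) - 1) := by
  have key : ∀ y : Fin C, ∑ i, |p i - onehot C y i| = 2 * (1 - p y) := by
    intro y
    have hle : p y ≤ 1 := by
      rw [← hsum]
      exact Finset.single_le_sum (fun i _ => hp i) (Finset.mem_univ y)
    have hsplit := Finset.add_sum_erase Finset.univ
      (fun i => |p i - onehot C y i|) (Finset.mem_univ y)
    rw [← hsplit]
    have h1 : |p y - onehot C y y| = 1 - p y := by
      simp [onehot, abs_of_nonpos, sub_nonpos.mpr hle, abs_sub_comm,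
        abs_of_nonneg, sub_nonneg.mpr hle]
    have h2 : ∑ i ∈ Finset.univ.erase y, |p i - onehot C y i|
        = ∑ i ∈ Finset.univ.erase y, p i := by
      apply Finset.sum_congr rfl
      intro i hi
      have : i ≠ y := Finset.ne_of_mem_erase hi
      simp [onehot, this, abs_of_nonneg (hp i)]
    have h3 : ∑ i ∈ Finset.univ.erase y, p i = 1 - p y := by
      have := Finset.add_sum_erase Finset.univ p (Finset.mem_univ y)
      linarith [hsum, this]
    rw [h1, h2, h3]; ring
  refine ⟨key, ?_⟩
  have : ∑ y : Fin C, ∑ i, |p i - onehot C y i| = ∑ y : Fin C, 2 * (1 - p y) :=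
    Finset.sum_congr rfl fun y _ => key y
  rw [this]
  rw [Finset.sum_congr rfl (fun y _ => by ring : ∀ y ∈ Finset.univ, 2 * (1 - p y) = 2 - 2 * p y)]
  rw [Finset.sum_sub_distrib, ← Finset.mul_sum, hsum]
  simp
  ring
end
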